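/- Let (W_t)_{t≥0} be a standard Brownian motion and let T > 0. Then, almost surely, the sum over i = 0, …, ⌊nT⌋ − 1 of |W_{(i+1)/n} − W_{i/n}| tends to +∞ as n → ∞. -/

import Mathlib

open MeasureTheory ProbabilityTheory Filter
open scoped NNReal ENNReal

/-- A standard Brownian motion: `W 0 = 0` a.s., a.s. continuous paths,
independent increments, and Gaussian increments `W t - W s ~ N(0, t - s)`. -/
structure IsStandardBrownianMotion {Ω : Type*} [MeasurableSpace Ω]
    (P : Measure Ω) (W : ℝ → Ω → ℝ) : Prop where
  isProbability : IsProbabilityMeasure P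
  measurable : ∀ t : ℝ, Measurable (W t)
  init : ∀ᵐ ω ∂P, W 0 ω = 0
  cont : ∀ᵐ ω ∂P, Continuous fun t => W t ω
  indepIncr : ∀ (n : ℕ) (t : Fin (n + 1) → ℝ), Monotone t →
    iIndepFun
      (fun i : Fin n => fun ω => W (t i.succ) ω - W (t i.castSucc) ω) P
  gaussIncr : ∀ s t : ℝ, 0 ≤ s → s ≤ t →
    P.map (fun ω => W t ω - W s ω) = gaussianReal 0 (t - s).toNNReal


noncomputable def myRho : ℝ :=
  1 - (1 - Real.exp (-1)) * (Real.exp (-2) / Real.sqrt (2 * Real.pi))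

lemma myRho_pos : 0 < myRho := by
  rw [myRho]
  have h1 : Real.exp (-1) < 1 := Real.exp_lt_one_iff.mpr (by norm_num)
  have h2 : Real.exp (-2) < 1 := Real.exp_lt_one_iff.mpr (by norm_num)
  have h3 : (1:ℝ) ≤ Real.sqrt (2 * Real.pi) := by
    rw [show (1:ℝ) = Real.sqrt 1 by simp]
    apply Real.sqrt_le_sqrt
    nlinarith [Real.pi_gt_three]
  have h4 : Real.exp (-2) / Real.sqrt (2 * Real.pi) < 1 := by
    rw [div_lt_one (by linarith)]
    linarith
  have h5 : 0 < Real.exp (-2) / Real.sqrt (2 * Real.pi) := by positivity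
  nlinarith [Real.exp_pos (-1)]

lemma myRho_lt_one : myRho < 1 := by
  rw [myRho]
  have h1 : Real.exp (-1) < 1 := Real.exp_lt_one_iff.mpr (by norm_num)
  have h5 : 0 < Real.exp (-2) / Real.sqrt (2 * Real.pi) := by positivity
  nlinarith


lemma my_gauss_tail (v : ℝ≥0) (hv : v ≠ 0) :
    ENNReal.ofReal (Real.exp (-2) / Real.sqrt (2 * Real.pi)) ≤
      gaussianReal 0 v {y : ℝ | Real.sqrt v ≤ |y|} := by
  have hvpos : (0:ℝ) < v := lt_of_le_of_ne (v.coe_nonneg) (by exact_mod_cast (Ne.symm hv))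
  have hsv : (0:ℝ) < Real.sqrt v := Real.sqrt_pos.mpr hvpos
  set s : Set ℝ := Set.Icc (Real.sqrt v) (2 * Real.sqrt v) with hs
  have hsub : s ⊆ {y : ℝ | Real.sqrt v ≤ |y|} := by
    intro y hy
    exact le_trans hy.1 (le_abs_self y)
  refine le_trans ?_ (measure_mono hsub)
  rw [gaussianReal_apply_eq_integral 0 hv s]
  apply ENNReal.ofReal_le_ofReal
  have hconst : ∀ x ∈ s, (Real.sqrt (2 * Real.pi * v))⁻¹ * Real.exp (-2)
      ≤ gaussianPDFReal 0 v x := by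
    intro x hx
    rw [gaussianPDFReal]
    simp only [sub_zero]
    refine mul_le_mul_of_nonneg_left ?_ (by positivity)
    rw [Real.exp_le_exp, neg_le, neg_div, neg_neg]
    rw [div_le_iff₀ (by positivity)]
    have hx2 : x ^ 2 ≤ (2 * Real.sqrt v) ^ 2 := by
      have h0 : 0 ≤ x := le_trans hsv.le hx.1
      exact pow_le_pow_left₀ h0 hx.2 2
    have : (2 * Real.sqrt v) ^ 2 = 4 * v := by
      rw [mul_pow, Real.sq_sqrt hvpos.le]; norm_num
    nlinarith
  have hint : IntegrableOn (gaussianPDFReal 0 v) s :=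
    (integrable_gaussianPDFReal 0 v).integrableOn
  have hle : ∫ x in s, (Real.sqrt (2 * Real.pi * v))⁻¹ * Real.exp (-2)
      ≤ ∫ x in s, gaussianPDFReal 0 v x := by
    apply setIntegral_mono_on ((integrableOn_const_iff).mpr (Or.inr ?_)) hint measurableSet_Icc hconst
    rw [hs, Real.volume_Icc]
    exact ENNReal.ofReal_lt_top
  refine le_trans (le_of_eq ?_) hle
  rw [setIntegral_const, hs, measureReal_def, Real.volume_Icc, smul_eq_mul]
  rw [ENNReal.toReal_ofReal (by linarith)]
  have h2 : (2 * Real.sqrt v - Real.sqrt v) = Real.sqrt v := by ring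
  rw [h2, Real.sqrt_mul (by positivity) (v:ℝ), mul_inv]
  have hsvne : Real.sqrt v ≠ 0 := ne_of_gt hsv
  field_simp

lemma my_mgf_bound {Ω : Type*} [MeasurableSpace Ω] (P : Measure Ω) [IsProbabilityMeasure P]
    (Y : Ω → ℝ) (hY : Measurable Y) (v : ℝ≥0) (hv : v ≠ 0)
    (hlaw : P.map Y = gaussianReal 0 v) :
    mgf (fun ω => -|Y ω|) P (Real.sqrt v)⁻¹ ≤ myRho := by
  have hvpos : (0:ℝ) < v := lt_of_le_of_ne (v.coe_nonneg) (by exact_mod_cast (Ne.symm hv))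
  have hsv : (0:ℝ) < Real.sqrt v := Real.sqrt_pos.mpr hvpos
  set l : ℝ := (Real.sqrt v)⁻¹ with hl
  have hlpos : 0 < l := inv_pos.mpr hsv
  set t : Set ℝ := {y : ℝ | Real.sqrt v ≤ |y|} with ht
  have htm : MeasurableSet t := (isClosed_le continuous_const continuous_abs).measurableSet
  -- rewrite mgf as integral over the law
  have hmap : mgf (fun ω => -|Y ω|) P l = ∫ y, Real.exp (l * (-|y|)) ∂(gaussianReal 0 v) := by
    rw [mgf, ← hlaw, integral_map hY.aemeasurable]
    exact ((measurable_const.mul measurable_abs.neg).exp).aestronglyMeasurable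
  rw [hmap]
  -- pointwise bound
  have hpt : ∀ y : ℝ, Real.exp (l * (-|y|)) ≤
      1 - (1 - Real.exp (-1)) * t.indicator (fun _ => (1:ℝ)) y := by
    intro y
    by_cases hy : y ∈ t
    · rw [Set.indicator_of_mem hy]
      have : l * (-|y|) ≤ -1 := by
        have h1 : Real.sqrt v ≤ |y| := hy
        have : 1 ≤ l * |y| := by
          rw [hl]
          calc (1:ℝ) = Real.sqrt v * (Real.sqrt v)⁻¹ := (mul_inv_cancel₀ (ne_of_gt hsv)).symm
          _ ≤ |y| * (Real.sqrt v)⁻¹ := by gcongr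
          _ = (Real.sqrt v)⁻¹ * |y| := mul_comm _ _
        linarith
      calc Real.exp (l * (-|y|)) ≤ Real.exp (-1) := Real.exp_le_exp.mpr this
      _ = 1 - (1 - Real.exp (-1)) * 1 := by ring
    · rw [Set.indicator_of_notMem hy]
      simp only [mul_zero, sub_zero]
      rw [← Real.exp_zero]
      apply Real.exp_le_exp.mpr
      rw [mul_neg, neg_nonpos]
      positivity
  -- integrability
  have hint1 : Integrable (fun y => Real.exp (l * (-|y|))) (gaussianReal 0 v) := by
    apply (integrable_const (1:ℝ)).mono'
      ((measurable_const.mul measurable_abs.neg).exp).aestronglyMeasurable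
    refine ae_of_all _ fun y => ?_
    rw [Real.norm_eq_abs, abs_of_pos (Real.exp_pos _), ← Real.exp_zero]
    apply Real.exp_le_exp.mpr
    show (Real.sqrt v)⁻¹ * -|y| ≤ 0
    rw [mul_neg, neg_nonpos]
    positivity
  have hint2 : Integrable (fun y => 1 - (1 - Real.exp (-1)) * t.indicator (fun _ => (1:ℝ)) y)
      (gaussianReal 0 v) := by
    apply (integrable_const (1:ℝ)).sub
    exact (((integrable_const (1:ℝ)).indicator htm).const_mul _)
  calc ∫ y, Real.exp (l * (-|y|)) ∂(gaussianReal 0 v)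
      ≤ ∫ y, (1 - (1 - Real.exp (-1)) * t.indicator (fun _ => (1:ℝ)) y) ∂(gaussianReal 0 v) :=
        integral_mono hint1 hint2 hpt
    _ = 1 - (1 - Real.exp (-1)) * ((gaussianReal 0 v) t).toReal := by
        rw [integral_sub (integrable_const _)
          (((integrable_const (1:ℝ)).indicator htm).const_mul _)]
        rw [MeasureTheory.integral_const_mul, integral_indicator_const _ htm]
        simp [measure_univ, measureReal_def]
    _ ≤ myRho := by
        rw [myRho]
        have h1 : Real.exp (-1) < 1 := Real.exp_lt_one_iff.mpr (by norm_num)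
        have htail := my_gauss_tail v hv
        have hfin : (gaussianReal 0 v) t ≠ ⊤ := measure_ne_top _ _
        have : Real.exp (-2) / Real.sqrt (2 * Real.pi) ≤ ((gaussianReal 0 v) t).toReal := by
          rw [← ENNReal.ofReal_le_iff_le_toReal hfin] at *
          exact htail
        nlinarith

lemma my_chernoff {Ω : Type*} [MeasurableSpace Ω] (P : Measure Ω) (W : ℝ → Ω → ℝ)
    (hW : IsStandardBrownianMotion P W) (n : ℕ) (hn : 1 ≤ n) (m : ℕ) (a : ℝ) :
    (P {ω | ∑ i ∈ Finset.range m,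
        |W ((i + 1 : ℕ) / (n : ℝ)) ω - W ((i : ℕ) / (n : ℝ)) ω| ≤ a}).toReal
      ≤ Real.exp (Real.sqrt n * a) * myRho ^ m := by
  have : IsProbabilityMeasure P := hW.isProbability
  have hnpos : (0:ℝ) < n := by exact_mod_cast hn
  set v : ℝ≥0 := ((1:ℝ)/n).toNNReal with hvdef
  have hvco : (v:ℝ) = 1/n := Real.coe_toNNReal _ (by positivity)
  have hv : v ≠ 0 := by
    intro h
    rw [h] at hvco
    simp at hvco
    exact absurd hvco (by positivity)
  set l : ℝ := (Real.sqrt v)⁻¹ with hldef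
  have hleq : l = Real.sqrt n := by
    rw [hldef, hvco, one_div, Real.sqrt_inv, inv_inv]
  have hlnonneg : 0 ≤ l := by rw [hleq]; positivity
  -- the increments
  set Y : Fin m → Ω → ℝ :=
    fun i ω => W (((i:ℕ) + 1 : ℕ) / (n : ℝ)) ω - W (((i:ℕ) : ℕ) / (n : ℝ)) ω with hYdef
  have hYm : ∀ i, Measurable (Y i) := fun i => (hW.measurable _).sub (hW.measurable _)
  -- independence
  have hindY : iIndepFun Y P := by
    have hmono : Monotone (fun j : Fin (m + 1) => ((j:ℕ) : ℝ) / (n : ℝ)) := by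
      intro j k hjk
      have hc : ((j:ℕ) : ℝ) ≤ ((k:ℕ) : ℝ) := Nat.cast_le.mpr hjk
      exact div_le_div_of_nonneg_right hc hnpos.le
    have h := hW.indepIncr m (fun j : Fin (m + 1) => ((j:ℕ) : ℝ) / (n : ℝ)) hmono
    convert h using 1
    ext i ω
    simp [hYdef]
  -- laws
  have hlaw : ∀ i : Fin m, P.map (Y i) = gaussianReal 0 v := by
    intro i
    have h0 : (0:ℝ) ≤ ((i:ℕ) : ℝ) / n := by positivity
    have hle : ((i:ℕ) : ℝ) / n ≤ (((i:ℕ) + 1 : ℕ) : ℝ) / n := by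
      gcongr
      push_cast
      linarith
    have h := hW.gaussIncr _ _ h0 hle
    have heq : ((((i:ℕ) + 1 : ℕ) : ℝ) / n - ((i:ℕ) : ℝ) / n) = 1/n := by
      push_cast
      field_simp
      ring
    rw [heq] at h
    exact h
  -- the negated absolute increments
  set X : Fin m → Ω → ℝ := fun i ω => -|Y i ω| with hXdef
  have hXm : ∀ i, Measurable (X i) := fun i => (hYm i).abs.neg
  have hindX : iIndepFun X P := by
    have := hindY.comp (fun _ => fun y : ℝ => -|y|) (fun _ => measurable_abs.neg)
    exact this
  -- the sum
  set S : Ω → ℝ :=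
    fun ω => ∑ i ∈ Finset.range m,
      |W ((i + 1 : ℕ) / (n : ℝ)) ω - W ((i : ℕ) / (n : ℝ)) ω| with hSdef
  have hSm : Measurable S := by
    apply Finset.measurable_sum
    intro i _
    exact ((hW.measurable _).sub (hW.measurable _)).abs
  have hSnonneg : ∀ ω, 0 ≤ S ω := fun ω => Finset.sum_nonneg fun i _ => abs_nonneg _
  have hnegS : ∀ ω, ∑ i : Fin m, X i ω = -(S ω) := by
    intro ω
    simp only [hSdef]
    rw [← Fin.sum_univ_eq_sum_range (fun i => |W ((i + 1 : ℕ) / (n : ℝ)) ω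
      - W ((i : ℕ) / (n : ℝ)) ω|) m]
    rw [← Finset.sum_neg_distrib]
  -- mgf factorization
  have hmgf : mgf S P (-l) ≤ myRho ^ m := by
    have h1 : mgf S P (-l) = mgf (-S) P l := (mgf_neg).symm
    have h2 : mgf (-S) P l = mgf (∑ i : Fin m, X i) P l := by
      congr 1
      funext ω
      rw [Finset.sum_apply, hnegS ω]
      rfl
    have h3 : mgf (∑ i : Fin m, X i) P l = ∏ i : Fin m, mgf (X i) P l :=
      hindX.mgf_sum hXm Finset.univ
    rw [h1, h2, h3]
    calc ∏ i : Fin m, mgf (X i) P l ≤ ∏ _i : Fin m, myRho := by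
          apply Finset.prod_le_prod
          · intro i _
            exact mgf_nonneg
          · intro i _
            rw [hldef]
            exact my_mgf_bound P (Y i) (hYm i) v hv (hlaw i)
      _ = myRho ^ m := by rw [Finset.prod_const, Finset.card_univ, Fintype.card_fin]
  -- integrability for Chernoff
  have hInt : Integrable (fun ω => Real.exp (-l * S ω)) P := by
    apply (integrable_const (1:ℝ)).mono'
      ((hSm.const_mul (-l)).exp).aestronglyMeasurable
    refine ae_of_all _ fun ω => ?_
    rw [Real.norm_eq_abs, abs_of_pos (Real.exp_pos _), ← Real.exp_zero]
    apply Real.exp_le_exp.mpr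
    rw [neg_mul, neg_nonpos]
    exact mul_nonneg hlnonneg (hSnonneg ω)
  have hcher := measure_le_le_exp_mul_mgf (X := S) (μ := P) (t := -l) a
    (neg_nonpos.mpr hlnonneg) hInt
  rw [neg_neg] at hcher
  rw [hleq] at hcher hmgf
  calc (P {ω | S ω ≤ a}).toReal ≤ Real.exp (Real.sqrt n * a) * mgf S P (-Real.sqrt n) := hcher
    _ ≤ Real.exp (Real.sqrt n * a) * myRho ^ m :=
        mul_le_mul_of_nonneg_left hmgf (Real.exp_pos _).le

lemma my_sqrt_tendsto : Tendsto (fun n : ℕ => Real.sqrt n) atTop atTop := by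
  refine tendsto_atTop.mpr fun b => ?_
  filter_upwards [eventually_ge_atTop ⌈b ^ 2⌉₊] with n hn
  have h1 : (b : ℝ) ^ 2 ≤ (n : ℝ) := le_trans (Nat.le_ceil _) (by exact_mod_cast hn)
  calc b ≤ |b| := le_abs_self b
    _ = Real.sqrt (b ^ 2) := (Real.sqrt_sq_eq_abs b).symm
    _ ≤ Real.sqrt n := Real.sqrt_le_sqrt h1

/-- Almost surely, the first-variation sums
`∑_{i=0}^{⌊nT⌋-1} |W_{(i+1)/n} - W_{i/n}|` tend to `+∞` as `n → ∞`. -/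
theorem first_variation_of_brownian_tendsto_atTop
    {Ω : Type*} [MeasurableSpace Ω] (P : Measure Ω) (W : ℝ → Ω → ℝ)
    (hW : IsStandardBrownianMotion P W) (T : ℝ) (hT : 0 < T) :
    ∀ᵐ ω ∂P, Tendsto
      (fun n : ℕ => ∑ i ∈ Finset.range ⌊(n : ℝ) * T⌋₊,
        |W ((i + 1 : ℕ) / (n : ℝ)) ω - W ((i : ℕ) / (n : ℝ)) ω|)
      atTop atTop := by
  have hPprob : IsProbabilityMeasure P := hW.isProbability
  set L : ℝ := Real.log myRho with hLdef
  have hL : L < 0 := Real.log_neg myRho_pos myRho_lt_one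
  set ε : ℝ := T * (-L) / 2 with hεdef
  have hε : 0 < ε := by
    rw [hεdef]
    have : 0 < -L := by linarith
    positivity
  set r : ℝ := Real.exp (T * L / 2) with hrdef
  have hr0 : 0 < r := Real.exp_pos _
  have hr1 : r < 1 := by
    rw [hrdef, Real.exp_lt_one_iff]
    nlinarith
  -- the bad sets
  set S : ℕ → Ω → ℝ := fun n ω => ∑ i ∈ Finset.range ⌊(n : ℝ) * T⌋₊,
    |W ((i + 1 : ℕ) / (n : ℝ)) ω - W ((i : ℕ) / (n : ℝ)) ω| with hSdef
  set A : ℕ → Set Ω := fun n => {ω | S n ω ≤ ε * Real.sqrt n} with hAdef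
  -- bound on the measures of the bad sets
  have hbound : ∀ n : ℕ, P (A n) ≤ ENNReal.ofReal (myRho⁻¹ * r ^ n) := by
    intro n
    rcases Nat.eq_zero_or_pos n with hn0 | hn
    · subst hn0
      calc P (A 0) ≤ 1 := prob_le_one
        _ = ENNReal.ofReal 1 := by simp
        _ ≤ ENNReal.ofReal (myRho⁻¹ * r ^ 0) := by
            apply ENNReal.ofReal_le_ofReal
            rw [pow_zero, mul_one]
            exact (one_le_inv₀ myRho_pos).mpr myRho_lt_one.le
    · have hch := my_chernoff P W hW n hn ⌊(n : ℝ) * T⌋₊ (ε * Real.sqrt n)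
      have hne : P (A n) ≠ ⊤ := measure_ne_top _ _
      rw [← ENNReal.ofReal_toReal hne]
      apply ENNReal.ofReal_le_ofReal
      refine le_trans hch ?_
      -- real-number estimate
      set m : ℕ := ⌊(n : ℝ) * T⌋₊ with hmdef
      have hm : (n : ℝ) * T - 1 ≤ (m : ℝ) := by
        have := Nat.lt_floor_add_one ((n : ℝ) * T)
        push_cast at this ⊢
        linarith
      have hsq : Real.sqrt n * (ε * Real.sqrt n) = ε * n := by
        rw [← mul_assoc, mul_comm (Real.sqrt n) ε, mul_assoc,
          Real.mul_self_sqrt (Nat.cast_nonneg n)]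
      have hpow : myRho ^ m = Real.exp ((m : ℝ) * L) := by
        rw [hLdef, Real.exp_nat_mul, Real.exp_log myRho_pos]
      rw [hsq, hpow, ← Real.exp_add]
      have hrhoinv : myRho⁻¹ = Real.exp (-L) := by
        rw [hLdef, Real.exp_neg, Real.exp_log myRho_pos]
      have hrpow : r ^ n = Real.exp ((n : ℝ) * (T * L / 2)) := by
        rw [hrdef, Real.exp_nat_mul]
      rw [hrhoinv, hrpow, ← Real.exp_add]
      apply Real.exp_le_exp.mpr
      have hmL : (m : ℝ) * L ≤ ((n : ℝ) * T - 1) * L :=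
        mul_le_mul_of_nonpos_right hm hL.le
      have hεn : ε * (n : ℝ) = (n : ℝ) * (T * (-L)) / 2 := by
        rw [hεdef]; ring
      nlinarith
  -- Borel–Cantelli
  have hsum : (∑' n, P (A n)) ≠ ⊤ := by
    have hsummable : Summable (fun n : ℕ => myRho⁻¹ * r ^ n) :=
      (summable_geometric_of_lt_one hr0.le hr1).mul_left _
    have h1 : (∑' n, P (A n)) ≤ ∑' n, ENNReal.ofReal (myRho⁻¹ * r ^ n) :=
      ENNReal.tsum_le_tsum hbound
    have h2 : (∑' n, ENNReal.ofReal (myRho⁻¹ * r ^ n))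
        = ENNReal.ofReal (∑' n, myRho⁻¹ * r ^ n) := by
      rw [ENNReal.ofReal_tsum_of_nonneg (fun n => mul_nonneg (inv_nonneg.mpr myRho_pos.le) (pow_nonneg hr0.le n)) hsummable]
    exact ne_top_of_le_ne_top (by rw [h2]; exact ENNReal.ofReal_ne_top) h1
  have hae := MeasureTheory.ae_eventually_notMem hsum
  filter_upwards [hae] with ω hω
  apply tendsto_atTop_mono' atTop ?_ (Tendsto.const_mul_atTop hε my_sqrt_tendsto)
  filter_upwards [hω] with n hn
  exact le_of_lt (not_le.mp hn)
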